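/- Suppose the per-period costs are quadratic, C_h(x) = a_{1,h} x + a_{2,h} x² with a_{2,h} > 0 for all h, each feasible set L_n is nonempty, and α ∈ [0,1]. Then the hourly-proportional game has exactly one Nash equilibrium, and a profile ℓ ∈ L is a Nash equilibrium if and only if ℓ is the unique minimizer over L of the potential W^HP_α(ℓ) = (1−α) Σ_h [ (a_{2,h}/2)((ℓ^h)² + Σ_n (ℓ_n^h)²) + a_{1,h} ℓ^h ] + α Σ_n ω_n Σ_h (ℓ_n^h − ℓ̂_n^h)². -/

import Mathlib

open Finset

section HPaux

lemma hp_sum_update_eval {N : ℕ} {A β : Type*} [AddCommMonoid β]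
    (g : Fin N → A → β) (ℓ : Fin N → A) (n : Fin N) (x : A) :
    ∑ m, g m (Function.update ℓ n x m)
      = g n x + ∑ m ∈ Finset.univ.erase n, g m (ℓ m) := by
  rw [← Finset.add_sum_erase _ _ (Finset.mem_univ n), Function.update_self]
  congr 1
  exact Finset.sum_congr rfl fun m hm => by
    rw [Function.update_of_ne (Finset.ne_of_mem_erase hm)]

lemma hp_sum_erase_eval {N : ℕ} {A β : Type*} [AddCommMonoid β]
    (g : Fin N → A → β) (ℓ : Fin N → A) (n : Fin N) :
    ∑ m, g m (ℓ m) = g n (ℓ n) + ∑ m ∈ Finset.univ.erase n, g m (ℓ m) :=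
  (Finset.add_sum_erase _ _ (Finset.mem_univ n)).symm

/-- per-period slice expansion -/
lemma hp_slice {N : ℕ} (a1 a2 : ℝ) (y z : Fin N → ℝ) :
    a2 / 2 * ((∑ n, z n) ^ 2 + ∑ n, (z n) ^ 2) + a1 * (∑ n, z n)
      = (a2 / 2 * ((∑ n, y n) ^ 2 + ∑ n, (y n) ^ 2) + a1 * (∑ n, y n))
        + ∑ n, (a1 + a2 * ((∑ m, y m) + y n)) * (z n - y n)
        + a2 / 2 * ((∑ n, (z n - y n)) ^ 2 + ∑ n, (z n - y n) ^ 2) := by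
  have h1 : ∑ n, (a1 + a2 * ((∑ m, y m) + y n)) * (z n - y n)
      = (a1 + a2 * ∑ m, y m) * ((∑ n, z n) - ∑ n, y n)
        + a2 * ((∑ n, y n * z n) - ∑ n, (y n) ^ 2) := by
    calc ∑ n, (a1 + a2 * ((∑ m, y m) + y n)) * (z n - y n)
        = ∑ n, ((a1 + a2 * ∑ m, y m) * (z n - y n)
            + a2 * (y n * z n - (y n) ^ 2)) :=
          Finset.sum_congr rfl fun n _ => by ring
      _ = (∑ n, (a1 + a2 * ∑ m, y m) * (z n - y n))
            + ∑ n, a2 * (y n * z n - (y n) ^ 2) := Finset.sum_add_distrib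
      _ = (a1 + a2 * ∑ m, y m) * (∑ n, (z n - y n))
            + a2 * ∑ n, (y n * z n - (y n) ^ 2) := by
          rw [← Finset.mul_sum, ← Finset.mul_sum]
      _ = _ := by rw [Finset.sum_sub_distrib, Finset.sum_sub_distrib]
  have h2 : ∑ n, (z n - y n) = (∑ n, z n) - ∑ n, y n := Finset.sum_sub_distrib _ _
  have h3 : ∑ n, (z n - y n) ^ 2
      = (∑ n, (z n) ^ 2) - 2 * (∑ n, y n * z n) + ∑ n, (y n) ^ 2 := by
    calc ∑ n, (z n - y n) ^ 2
        = ∑ n, ((z n) ^ 2 - 2 * (y n * z n) + (y n) ^ 2) :=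
          Finset.sum_congr rfl fun n _ => by ring
      _ = (∑ n, ((z n) ^ 2 - 2 * (y n * z n))) + ∑ n, (y n) ^ 2 :=
          Finset.sum_add_distrib
      _ = ((∑ n, (z n) ^ 2) - ∑ n, 2 * (y n * z n)) + ∑ n, (y n) ^ 2 := by
          rw [Finset.sum_sub_distrib]
      _ = _ := by rw [← Finset.mul_sum]
  rw [h1, h2, h3]; ring

lemma hp_pref {H : ℕ} (lh y z : Fin H → ℝ) :
    ∑ h, (z h - lh h) ^ 2
      = (∑ h, (y h - lh h) ^ 2) + (∑ h, 2 * (y h - lh h) * (z h - y h))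
        + ∑ h, (z h - y h) ^ 2 := by
  rw [← Finset.sum_add_distrib, ← Finset.sum_add_distrib]
  exact Finset.sum_congr rfl fun h _ => by ring

noncomputable def hpDW {N H : ℕ} (ω : Fin N → ℝ) (lhat : Fin N → Fin H → ℝ)
    (a1 a2 : Fin H → ℝ) (α : ℝ) (ℓ x : Fin N → Fin H → ℝ) : ℝ :=
  ∑ n, ∑ h, ((1 - α) * (a1 h + a2 h * ((∑ m, ℓ m h) + ℓ n h))
      + 2 * α * ω n * (ℓ n h - lhat n h)) * (x n h - ℓ n h)

noncomputable def hpφ {N H : ℕ} (ω : Fin N → ℝ) (lhat : Fin N → Fin H → ℝ)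
    (a1 a2 : Fin H → ℝ) (α : ℝ) (ℓ : Fin N → Fin H → ℝ) (n : Fin N)
    (v : Fin H → ℝ) : ℝ :=
  ∑ h, ((1 - α) * (a1 h + a2 h * ((∑ m, ℓ m h) + ℓ n h))
      + 2 * α * ω n * (ℓ n h - lhat n h)) * (v h - ℓ n h)

noncomputable def hpQ {N H : ℕ} (ω : Fin N → ℝ) (a2 : Fin H → ℝ) (α : ℝ)
    (ℓ x : Fin N → Fin H → ℝ) : ℝ :=
  (1 - α) * ∑ h, a2 h / 2 * ((∑ n, (x n h - ℓ n h)) ^ 2 + ∑ n, (x n h - ℓ n h) ^ 2)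
    + α * ∑ n, ω n * ∑ h, (x n h - ℓ n h) ^ 2

lemma hpDW_sum {N H : ℕ} (ω : Fin N → ℝ) (lhat : Fin N → Fin H → ℝ)
    (a1 a2 : Fin H → ℝ) (α : ℝ) (ℓ x : Fin N → Fin H → ℝ) :
    hpDW ω lhat a1 a2 α ℓ x = ∑ n, hpφ ω lhat a1 a2 α ℓ n (x n) := rfl

lemma hpDW_alt {N H : ℕ} (ω : Fin N → ℝ) (lhat : Fin N → Fin H → ℝ)
    (a1 a2 : Fin H → ℝ) (α : ℝ) (ℓ x : Fin N → Fin H → ℝ) :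
    hpDW ω lhat a1 a2 α ℓ x
      = (1 - α) * ∑ h, ∑ n, (a1 h + a2 h * ((∑ m, ℓ m h) + ℓ n h)) * (x n h - ℓ n h)
        + α * ∑ n, ω n * ∑ h, 2 * (ℓ n h - lhat n h) * (x n h - ℓ n h) := by
  unfold hpDW
  calc ∑ n, ∑ h, ((1 - α) * (a1 h + a2 h * ((∑ m, ℓ m h) + ℓ n h))
          + 2 * α * ω n * (ℓ n h - lhat n h)) * (x n h - ℓ n h)
      = ∑ n, ((∑ h, (1 - α) * ((a1 h + a2 h * ((∑ m, ℓ m h) + ℓ n h)) * (x n h - ℓ n h)))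
          + ∑ h, α * (ω n * (2 * (ℓ n h - lhat n h) * (x n h - ℓ n h)))) :=
        Finset.sum_congr rfl fun n _ => by
          rw [← Finset.sum_add_distrib]
          exact Finset.sum_congr rfl fun h _ => by ring
    _ = (∑ n, ∑ h, (1 - α) * ((a1 h + a2 h * ((∑ m, ℓ m h) + ℓ n h)) * (x n h - ℓ n h)))
          + ∑ n, ∑ h, α * (ω n * (2 * (ℓ n h - lhat n h) * (x n h - ℓ n h))) :=
        Finset.sum_add_distrib
    _ = (1 - α) * ∑ n, ∑ h, (a1 h + a2 h * ((∑ m, ℓ m h) + ℓ n h)) * (x n h - ℓ n h)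
          + α * ∑ n, ω n * ∑ h, 2 * (ℓ n h - lhat n h) * (x n h - ℓ n h) := by
        simp only [← Finset.mul_sum]
    _ = _ := by rw [Finset.sum_comm]

lemma hp_expand {N H : ℕ} (ω : Fin N → ℝ) (lhat : Fin N → Fin H → ℝ)
    (a1 a2 : Fin H → ℝ) (α : ℝ) (ℓ x : Fin N → Fin H → ℝ) :
    (1 - α) * ∑ h, (a2 h / 2 * ((∑ m, x m h) ^ 2 + ∑ n, (x n h) ^ 2)
        + a1 h * (∑ m, x m h))
      + α * ∑ n, ω n * ∑ h, (x n h - lhat n h) ^ 2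
    = ((1 - α) * ∑ h, (a2 h / 2 * ((∑ m, ℓ m h) ^ 2 + ∑ n, (ℓ n h) ^ 2)
        + a1 h * (∑ m, ℓ m h))
      + α * ∑ n, ω n * ∑ h, (ℓ n h - lhat n h) ^ 2)
      + hpDW ω lhat a1 a2 α ℓ x + hpQ ω a2 α ℓ x := by
  rw [hpDW_alt]
  unfold hpQ
  have hG : ∑ h, (a2 h / 2 * ((∑ m, x m h) ^ 2 + ∑ n, (x n h) ^ 2)
        + a1 h * (∑ m, x m h))
      = (∑ h, (a2 h / 2 * ((∑ m, ℓ m h) ^ 2 + ∑ n, (ℓ n h) ^ 2)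
          + a1 h * (∑ m, ℓ m h)))
        + ((∑ h, ∑ n, (a1 h + a2 h * ((∑ m, ℓ m h) + ℓ n h)) * (x n h - ℓ n h))
        + ∑ h, a2 h / 2 * ((∑ n, (x n h - ℓ n h)) ^ 2 + ∑ n, (x n h - ℓ n h) ^ 2)) := by
    rw [← Finset.sum_add_distrib, ← Finset.sum_add_distrib]
    refine Finset.sum_congr rfl fun h _ => ?_
    have := hp_slice (a1 h) (a2 h) (fun n => ℓ n h) (fun n => x n h)
    linarith [this]
  have hP : ∑ n, ω n * ∑ h, (x n h - lhat n h) ^ 2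
      = (∑ n, ω n * ∑ h, (ℓ n h - lhat n h) ^ 2)
        + ((∑ n, ω n * ∑ h, 2 * (ℓ n h - lhat n h) * (x n h - ℓ n h))
        + ∑ n, ω n * ∑ h, (x n h - ℓ n h) ^ 2) := by
    rw [← Finset.sum_add_distrib, ← Finset.sum_add_distrib]
    refine Finset.sum_congr rfl fun n _ => ?_
    rw [hp_pref (lhat n) (ℓ n) (x n)]
    ring
  linear_combination (1 - α) * hG + α * hP

set_option maxHeartbeats 800000 in
lemma hp_pot {N H : ℕ} (ω : Fin N → ℝ) (lhat : Fin N → Fin H → ℝ)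
    (a1 a2 : Fin H → ℝ) (α : ℝ) (ℓ : Fin N → Fin H → ℝ) (n : Fin N)
    (x : Fin H → ℝ) :
    ((1 - α) * ∑ h, x h * (a1 h + a2 h * (∑ m, Function.update ℓ n x m h))
        + α * (ω n * ∑ h, (x h - lhat n h) ^ 2))
      + ((1 - α) * ∑ h, (a2 h / 2 * ((∑ m, ℓ m h) ^ 2 + ∑ n', (ℓ n' h) ^ 2)
          + a1 h * (∑ m, ℓ m h))
        + α * ∑ n', ω n' * ∑ h, (ℓ n' h - lhat n' h) ^ 2)
    = ((1 - α) * ∑ h, (a2 h / 2 * ((∑ m, Function.update ℓ n x m h) ^ 2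
          + ∑ n', (Function.update ℓ n x n' h) ^ 2)
          + a1 h * (∑ m, Function.update ℓ n x m h))
        + α * ∑ n', ω n' * ∑ h, (Function.update ℓ n x n' h - lhat n' h) ^ 2)
      + ((1 - α) * ∑ h, ℓ n h * (a1 h + a2 h * (∑ m, ℓ m h))
        + α * (ω n * ∑ h, (ℓ n h - lhat n h) ^ 2)) := by
  have e1 : ∀ h, ∑ m, Function.update ℓ n x m h
      = x h + ∑ m ∈ Finset.univ.erase n, ℓ m h :=
    fun h => by simpa only [] using hp_sum_update_eval (fun m y => y h) ℓ n x
  have e2 : ∀ h, ∑ m, (Function.update ℓ n x m h) ^ 2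
      = (x h) ^ 2 + ∑ m ∈ Finset.univ.erase n, (ℓ m h) ^ 2 :=
    fun h => by simpa only [] using hp_sum_update_eval (fun m y => (y h) ^ 2) ℓ n x
  have e3 : ∑ m, ω m * ∑ h, (Function.update ℓ n x m h - lhat m h) ^ 2
      = ω n * ∑ h, (x h - lhat n h) ^ 2
        + ∑ m ∈ Finset.univ.erase n, ω m * ∑ h, (ℓ m h - lhat m h) ^ 2 :=
    by simpa only [] using
      hp_sum_update_eval (fun m y => ω m * ∑ h, (y h - lhat m h) ^ 2) ℓ n x
  have e1' : ∀ h, ∑ m, ℓ m h = ℓ n h + ∑ m ∈ Finset.univ.erase n, ℓ m h :=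
    fun h => by simpa only [] using hp_sum_erase_eval (fun m y => y h) ℓ n
  have e2' : ∀ h, ∑ m, (ℓ m h) ^ 2
      = (ℓ n h) ^ 2 + ∑ m ∈ Finset.univ.erase n, (ℓ m h) ^ 2 :=
    fun h => by simpa only [] using hp_sum_erase_eval (fun m y => (y h) ^ 2) ℓ n
  have e3' : ∑ m, ω m * ∑ h, (ℓ m h - lhat m h) ^ 2
      = ω n * ∑ h, (ℓ n h - lhat n h) ^ 2
        + ∑ m ∈ Finset.univ.erase n, ω m * ∑ h, (ℓ m h - lhat m h) ^ 2 :=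
    by simpa only [] using
      hp_sum_erase_eval (fun m y => ω m * ∑ h, (y h - lhat m h) ^ 2) ℓ n
  simp only [e1, e2, e3, e1', e2', e3']
  have k2 : (∑ h, x h * (a1 h + a2 h * (x h + ∑ m ∈ Finset.univ.erase n, ℓ m h)))
      + (∑ h, (a2 h / 2 * ((ℓ n h + ∑ m ∈ Finset.univ.erase n, ℓ m h) ^ 2
          + ((ℓ n h) ^ 2 + ∑ m ∈ Finset.univ.erase n, (ℓ m h) ^ 2))
          + a1 h * (ℓ n h + ∑ m ∈ Finset.univ.erase n, ℓ m h)))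
      = (∑ h, (a2 h / 2 * ((x h + ∑ m ∈ Finset.univ.erase n, ℓ m h) ^ 2
          + ((x h) ^ 2 + ∑ m ∈ Finset.univ.erase n, (ℓ m h) ^ 2))
          + a1 h * (x h + ∑ m ∈ Finset.univ.erase n, ℓ m h)))
        + ∑ h, ℓ n h * (a1 h + a2 h * (ℓ n h + ∑ m ∈ Finset.univ.erase n, ℓ m h)) := by
    rw [← Finset.sum_add_distrib, ← Finset.sum_add_distrib]
    exact Finset.sum_congr rfl fun h _ => by ring
  linear_combination (1 - α) * k2

lemma hpφ_update {N H : ℕ} (ω : Fin N → ℝ) (lhat : Fin N → Fin H → ℝ)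
    (a1 a2 : Fin H → ℝ) (α : ℝ) (ℓ : Fin N → Fin H → ℝ) (n : Fin N)
    (v : Fin H → ℝ) :
    hpDW ω lhat a1 a2 α ℓ (Function.update ℓ n v) = hpφ ω lhat a1 a2 α ℓ n v := by
  rw [hpDW_sum]
  have := hp_sum_update_eval (fun m y => hpφ ω lhat a1 a2 α ℓ m y) ℓ n v
  rw [this]
  have hz : ∀ m, hpφ ω lhat a1 a2 α ℓ m (ℓ m) = 0 := fun m => by
    unfold hpφ; exact Finset.sum_eq_zero fun h _ => by ring
  rw [Finset.sum_congr rfl fun m _ => hz m, Finset.sum_const_zero, add_zero]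

lemma hpφ_line {N H : ℕ} (ω : Fin N → ℝ) (lhat : Fin N → Fin H → ℝ)
    (a1 a2 : Fin H → ℝ) (α : ℝ) (ℓ : Fin N → Fin H → ℝ) (n : Fin N)
    (x : Fin H → ℝ) (t : ℝ) :
    hpφ ω lhat a1 a2 α ℓ n (fun h => ℓ n h + t * (x h - ℓ n h))
      = t * hpφ ω lhat a1 a2 α ℓ n x := by
  unfold hpφ
  rw [Finset.mul_sum]
  exact Finset.sum_congr rfl fun h _ => by ring

lemma hpQ_update {N H : ℕ} (ω : Fin N → ℝ) (a2 : Fin H → ℝ) (α : ℝ)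
    (ℓ : Fin N → Fin H → ℝ) (n : Fin N) (v : Fin H → ℝ) :
    hpQ ω a2 α ℓ (Function.update ℓ n v)
      = (1 - α) * ∑ h, a2 h / 2 * ((v h - ℓ n h) ^ 2 + (v h - ℓ n h) ^ 2)
        + α * (ω n * ∑ h, (v h - ℓ n h) ^ 2) := by
  unfold hpQ
  have e1 : ∀ h, ∑ m, (Function.update ℓ n v m h - ℓ m h) = v h - ℓ n h := by
    intro h
    have := hp_sum_update_eval (fun m y => y h - ℓ m h) ℓ n v
    simpa using this
  have e2 : ∀ h, ∑ m, (Function.update ℓ n v m h - ℓ m h) ^ 2 = (v h - ℓ n h) ^ 2 := by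
    intro h
    have := hp_sum_update_eval (fun m y => (y h - ℓ m h) ^ 2) ℓ n v
    simpa using this
  have e3 : ∑ m, ω m * ∑ h, (Function.update ℓ n v m h - ℓ m h) ^ 2
      = ω n * ∑ h, (v h - ℓ n h) ^ 2 := by
    have := hp_sum_update_eval (fun m y => ω m * ∑ h, (y h - ℓ m h) ^ 2) ℓ n v
    simpa using this
  simp only [e1, e2, e3]

lemma hpQ_scale {N H : ℕ} (ω : Fin N → ℝ) (a2 : Fin H → ℝ) (α : ℝ)
    (ℓ : Fin N → Fin H → ℝ) (n : Fin N) (x : Fin H → ℝ) (t : ℝ) :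
    hpQ ω a2 α ℓ (Function.update ℓ n (fun h => ℓ n h + t * (x h - ℓ n h)))
      = t ^ 2 * hpQ ω a2 α ℓ (Function.update ℓ n x) := by
  rw [hpQ_update, hpQ_update]
  have p1 : ∑ h, a2 h / 2 * (((ℓ n h + t * (x h - ℓ n h)) - ℓ n h) ^ 2
        + ((ℓ n h + t * (x h - ℓ n h)) - ℓ n h) ^ 2)
      = t ^ 2 * ∑ h, a2 h / 2 * ((x h - ℓ n h) ^ 2 + (x h - ℓ n h) ^ 2) := by
    rw [Finset.mul_sum]
    exact Finset.sum_congr rfl fun h _ => by ring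
  have p2 : ∑ h, ((ℓ n h + t * (x h - ℓ n h)) - ℓ n h) ^ 2
      = t ^ 2 * ∑ h, (x h - ℓ n h) ^ 2 := by
    rw [Finset.mul_sum]
    exact Finset.sum_congr rfl fun h _ => by ring
  rw [p1, p2]
  ring

lemma hpQ_nonneg {N H : ℕ} (ω : Fin N → ℝ) (a2 : Fin H → ℝ) (α : ℝ)
    (hα0 : 0 ≤ α) (hα1 : α ≤ 1) (hω : ∀ n, 0 ≤ ω n) (ha2 : ∀ h, 0 ≤ a2 h)
    (ℓ x : Fin N → Fin H → ℝ) :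
    0 ≤ hpQ ω a2 α ℓ x := by
  unfold hpQ
  have h1 : 0 ≤ ∑ h, a2 h / 2 * ((∑ n, (x n h - ℓ n h)) ^ 2 + ∑ n, (x n h - ℓ n h) ^ 2) :=
    Finset.sum_nonneg fun h _ => mul_nonneg (by linarith [ha2 h])
      (add_nonneg (sq_nonneg _) (Finset.sum_nonneg fun n _ => sq_nonneg _))
  have h2 : 0 ≤ ∑ n, ω n * ∑ h, (x n h - ℓ n h) ^ 2 :=
    Finset.sum_nonneg fun n _ => mul_nonneg (hω n)
      (Finset.sum_nonneg fun h _ => sq_nonneg _)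
  have := mul_nonneg (by linarith : (0:ℝ) ≤ 1 - α) h1
  have := mul_nonneg hα0 h2
  linarith

lemma hpQ_pos_def {N H : ℕ} (ω : Fin N → ℝ) (a2 : Fin H → ℝ) (α : ℝ)
    (hα0 : 0 ≤ α) (hα1 : α ≤ 1) (hω : ∀ n, 0 < ω n) (ha2 : ∀ h, 0 < a2 h)
    (ℓ x : Fin N → Fin H → ℝ) (h0 : hpQ ω a2 α ℓ x = 0) : x = ℓ := by
  set R : ℝ := ∑ n, ∑ h, ((1 - α) * (a2 h / 2) + α * ω n) * (x n h - ℓ n h) ^ 2 with hRdef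
  have hsplit : R = (1 - α) * ∑ h, a2 h / 2 * ∑ n, (x n h - ℓ n h) ^ 2
      + α * ∑ n, ω n * ∑ h, (x n h - ℓ n h) ^ 2 := by
    rw [hRdef]
    calc ∑ n, ∑ h, ((1 - α) * (a2 h / 2) + α * ω n) * (x n h - ℓ n h) ^ 2
        = ∑ n, ((∑ h, (1 - α) * (a2 h / 2 * (x n h - ℓ n h) ^ 2))
            + ∑ h, α * (ω n * (x n h - ℓ n h) ^ 2)) :=
          Finset.sum_congr rfl fun n _ => by
            rw [← Finset.sum_add_distrib]
            exact Finset.sum_congr rfl fun h _ => by ring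
      _ = (∑ n, ∑ h, (1 - α) * (a2 h / 2 * (x n h - ℓ n h) ^ 2))
            + ∑ n, ∑ h, α * (ω n * (x n h - ℓ n h) ^ 2) := Finset.sum_add_distrib
      _ = (1 - α) * ∑ n, ∑ h, a2 h / 2 * (x n h - ℓ n h) ^ 2
            + α * ∑ n, ω n * ∑ h, (x n h - ℓ n h) ^ 2 := by
          simp only [← Finset.mul_sum]
      _ = (1 - α) * ∑ h, ∑ n, a2 h / 2 * (x n h - ℓ n h) ^ 2
            + α * ∑ n, ω n * ∑ h, (x n h - ℓ n h) ^ 2 := by rw [Finset.sum_comm]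
      _ = _ := by simp only [← Finset.mul_sum]
  have hsplit2 : ∑ h, a2 h / 2 * ((∑ n, (x n h - ℓ n h)) ^ 2 + ∑ n, (x n h - ℓ n h) ^ 2)
      = (∑ h, a2 h / 2 * (∑ n, (x n h - ℓ n h)) ^ 2)
        + ∑ h, a2 h / 2 * ∑ n, (x n h - ℓ n h) ^ 2 := by
    rw [← Finset.sum_add_distrib]
    exact Finset.sum_congr rfl fun h _ => by ring
  have hQR : hpQ ω a2 α ℓ x
      = (1 - α) * ∑ h, a2 h / 2 * (∑ n, (x n h - ℓ n h)) ^ 2 + R := by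
    unfold hpQ
    rw [hsplit]
    linear_combination (1 - α) * hsplit2
  have hD : 0 ≤ (1 - α) * ∑ h, a2 h / 2 * (∑ n, (x n h - ℓ n h)) ^ 2 :=
    mul_nonneg (by linarith)
      (Finset.sum_nonneg fun h _ => mul_nonneg (by linarith [ha2 h]) (sq_nonneg _))
  have hRnonneg : ∀ n, (n ∈ (Finset.univ : Finset (Fin N))) →
      0 ≤ ∑ h, ((1 - α) * (a2 h / 2) + α * ω n) * (x n h - ℓ n h) ^ 2 := by
    intro n _
    refine Finset.sum_nonneg fun h _ => mul_nonneg ?_ (sq_nonneg _)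
    have := (hω n).le
    have := (ha2 h).le
    nlinarith
  have hcoef : ∀ n h, 0 < (1 - α) * (a2 h / 2) + α * ω n := by
    intro n h
    rcases eq_or_lt_of_le hα1 with heq | hlt
    · rw [heq]; simpa using hω n
    · nlinarith [mul_nonneg hα0 (hω n).le, mul_pos (by linarith : (0:ℝ) < 1 - α)
        (by linarith [ha2 h] : (0:ℝ) < a2 h / 2)]
  have hR0 : R = 0 := by
    have h1 : 0 ≤ R := Finset.sum_nonneg hRnonneg
    linarith [hQR, h0, hD]
  have hRzero := (Finset.sum_eq_zero_iff_of_nonneg hRnonneg).mp hR0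
  funext n h
  have hn := hRzero n (Finset.mem_univ n)
  have hterm := (Finset.sum_eq_zero_iff_of_nonneg
    (fun h _ => mul_nonneg (hcoef n h).le (sq_nonneg _))).mp hn h (Finset.mem_univ h)
  have hsq : (x n h - ℓ n h) ^ 2 = 0 := by
    rcases mul_eq_zero.mp hterm with hc | hd
    · exact absurd hc (ne_of_gt (hcoef n h))
    · exact hd
  have := pow_eq_zero_iff (n := 2) (by norm_num) |>.mp hsq
  linarith [this]

lemma hp_limit (φ q : ℝ) (hq : 0 ≤ q)
    (key : ∀ t : ℝ, 0 ≤ t → t ≤ 1 → 0 ≤ t * φ + t ^ 2 * q) : 0 ≤ φ := by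
  by_contra hneg
  push_neg at hneg
  have hq1 : (0:ℝ) < q + 1 := by linarith
  set t := min 1 (-φ / (2 * (q + 1))) with ht
  have ht0 : 0 < t := lt_min one_pos (div_pos (by linarith) (by linarith))
  have h := key t ht0.le (min_le_left _ _)
  have htle : t ≤ -φ / (2 * (q + 1)) := min_le_right _ _
  have h4 : (-φ / (2 * (q + 1))) * (q + 1) = -φ / 2 := by
    have h5 : (q + 1) ≠ 0 := ne_of_gt hq1
    field_simp
  have h3 : t * q ≤ -φ / 2 - t := by
    have := mul_le_mul_of_nonneg_right htle (le_of_lt hq1)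
    rw [h4] at this
    nlinarith
  have h6 := mul_le_mul_of_nonneg_left h3 ht0.le
  nlinarith [h, h6, mul_pos ht0 (neg_pos.mpr hneg)]


end HPaux

/-- With quadratic per-period costs (`a_{2,h} > 0`), nonempty
feasible sets and `α ∈ [0,1]`, the hourly-proportional game has exactly one
Nash equilibrium, and a feasible profile is a Nash equilibrium iff it is the
unique minimizer of the potential `W^HP_α` over `L`. -/
theorem hp_unique_NE_potential_minimizer
    (N H : ℕ)
    (En : Fin N → ℝ) (hEn : ∀ n, 0 < En n)
    (ω : Fin N → ℝ) (hω : ∀ n, 0 < ω n)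
    (lhat : Fin N → Fin H → ℝ)
    (lb ub : Fin N → Fin H → ℝ)
    (hlb : ∀ n h, 0 ≤ lb n h) (hbnds : ∀ n h, lb n h ≤ ub n h)
    (a1 a2 : Fin H → ℝ) (ha2 : ∀ h, 0 < a2 h)
    (α : ℝ) (hα : α ∈ Set.Icc (0 : ℝ) 1)
    (Ln : Fin N → Set (Fin H → ℝ))
    (hLn : ∀ n, Ln n =
      {x | (∑ h, x h) = En n ∧ ∀ h, lb n h ≤ x h ∧ x h ≤ ub n h})
    (hLnNonempty : ∀ n, (Ln n).Nonempty)
    (L : Set (Fin N → Fin H → ℝ))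
    (hL : L = {ℓ | ∀ n, ℓ n ∈ Ln n})
    (f : Fin N → (Fin N → Fin H → ℝ) → ℝ)
    (hf : ∀ n ℓ, f n ℓ =
      (1 - α) * ∑ h, ℓ n h * (a1 h + a2 h * (∑ m, ℓ m h))
        + α * (ω n * ∑ h, (ℓ n h - lhat n h) ^ 2))
    (W : (Fin N → Fin H → ℝ) → ℝ)
    (hW : ∀ ℓ, W ℓ =
      (1 - α) * ∑ h, (a2 h / 2 * ((∑ m, ℓ m h) ^ 2 + ∑ n, (ℓ n h) ^ 2)
          + a1 h * (∑ m, ℓ m h))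
        + α * ∑ n, ω n * ∑ h, (ℓ n h - lhat n h) ^ 2)
    (isNE : (Fin N → Fin H → ℝ) → Prop)
    (hNE : ∀ ℓ, isNE ℓ ↔ ℓ ∈ L ∧
      ∀ n, ∀ x ∈ Ln n, f n ℓ ≤ f n (Function.update ℓ n x)) :
    (∃! ℓ, isNE ℓ) ∧
      (∀ ℓ ∈ L, (isNE ℓ ↔
        ((∀ x ∈ L, W ℓ ≤ W x) ∧ (∀ x ∈ L, W x = W ℓ → x = ℓ)))) := by
  obtain ⟨hα0, hα1⟩ := hα
  -- quadratic expansion of the potential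
  have hExp : ∀ ℓ' x, W x = W ℓ' + hpDW ω lhat a1 a2 α ℓ' x + hpQ ω a2 α ℓ' x := by
    intro ℓ' x
    rw [hW x, hW ℓ']
    exact hp_expand ω lhat a1 a2 α ℓ' x
  have hQ0 : ∀ ℓ' x : Fin N → Fin H → ℝ, 0 ≤ hpQ ω a2 α ℓ' x := fun ℓ' x =>
    hpQ_nonneg ω a2 α hα0 hα1 (fun n => (hω n).le) (fun h => (ha2 h).le) ℓ' x
  -- exact potential property
  have hPot : ∀ (ℓ' : Fin N → Fin H → ℝ) (n : Fin N) (x : Fin H → ℝ),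
      f n (Function.update ℓ' n x) - f n ℓ' = W (Function.update ℓ' n x) - W ℓ' := by
    intro ℓ' n x
    have h1 := hp_pot ω lhat a1 a2 α ℓ' n x
    rw [hf n (Function.update ℓ' n x), hf n ℓ', hW (Function.update ℓ' n x), hW ℓ']
    simp only [Function.update_self]
    linarith [h1]
  -- Nash equilibrium in terms of the potential
  have hNEW : ∀ ℓ', isNE ℓ' ↔ (ℓ' ∈ L ∧
      ∀ n, ∀ x ∈ Ln n, W ℓ' ≤ W (Function.update ℓ' n x)) := by
    intro ℓ'
    rw [hNE]
    refine and_congr_right fun _ => ?_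
    refine forall_congr' fun n => forall₂_congr fun x hx => ?_
    constructor
    · intro h; have := hPot ℓ' n x; linarith
    · intro h; have := hPot ℓ' n x; linarith
  have hupdL : ∀ ℓ' ∈ L, ∀ n, ∀ x ∈ Ln n, Function.update ℓ' n x ∈ L := by
    intro ℓ' hmem n x hx
    rw [hL] at hmem ⊢
    intro m
    rcases eq_or_ne m n with rfl | hne
    · simpa [Function.update_self] using hx
    · rw [Function.update_of_ne hne]; exact hmem m
  have hMinNE : ∀ ℓ' ∈ L, (∀ x ∈ L, W ℓ' ≤ W x) → isNE ℓ' := by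
    intro ℓ' hmem hmin
    exact (hNEW ℓ').mpr ⟨hmem, fun n x hx => hmin _ (hupdL ℓ' hmem n x hx)⟩
  -- segments stay in the feasible sets
  have hseg : ∀ (n : Fin N) (y x : Fin H → ℝ), y ∈ Ln n → x ∈ Ln n →
      ∀ t : ℝ, 0 ≤ t → t ≤ 1 → (fun h => y h + t * (x h - y h)) ∈ Ln n := by
    intro n y x hy hx t ht0 ht1
    rw [hLn] at hy hx ⊢
    simp only [Set.mem_setOf_eq] at hy hx ⊢
    obtain ⟨hy1, hy2⟩ := hy
    obtain ⟨hx1, hx2⟩ := hx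
    constructor
    · have hs : ∑ h, (y h + t * (x h - y h))
          = (∑ h, y h) + t * ((∑ h, x h) - ∑ h, y h) := by
        rw [Finset.sum_add_distrib, ← Finset.mul_sum, Finset.sum_sub_distrib]
      rw [hs, hy1, hx1]; ring
    · intro h
      constructor
      · nlinarith [mul_nonneg (by linarith : (0:ℝ) ≤ 1 - t)
          (by linarith [(hy2 h).1] : 0 ≤ y h - lb n h),
          mul_nonneg ht0 (by linarith [(hx2 h).1] : 0 ≤ x h - lb n h)]
      · nlinarith [mul_nonneg (by linarith : (0:ℝ) ≤ 1 - t)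
          (by linarith [(hy2 h).2] : 0 ≤ ub n h - y h),
          mul_nonneg ht0 (by linarith [(hx2 h).2] : 0 ≤ ub n h - x h)]
  -- at a Nash equilibrium all directional block terms are nonnegative
  have hblock : ∀ ℓ', isNE ℓ' → ∀ n, ∀ x ∈ Ln n,
      0 ≤ hpφ ω lhat a1 a2 α ℓ' n x := by
    intro ℓ' hne n x hx
    obtain ⟨hmem, hdev⟩ := (hNEW ℓ').mp hne
    have hℓn : ℓ' n ∈ Ln n := by rw [hL] at hmem; exact hmem n
    refine hp_limit _ _ (hQ0 ℓ' (Function.update ℓ' n x)) ?_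
    intro t ht0 ht1
    have hymem := hseg n (ℓ' n) x hℓn hx t ht0 ht1
    have h1 := hdev n _ hymem
    have h2 := hExp ℓ' (Function.update ℓ' n (fun h => ℓ' n h + t * (x h - ℓ' n h)))
    rw [hpφ_update, hpφ_line, hpQ_scale] at h2
    linarith [h1, h2]
  -- Nash equilibria are global minimizers (and strictly unique ones)
  have hNEmin : ∀ ℓ', isNE ℓ' → ∀ x ∈ L, W ℓ' ≤ W x := by
    intro ℓ' hne x hxL
    have h2 := hExp ℓ' x
    have hDW : 0 ≤ hpDW ω lhat a1 a2 α ℓ' x := by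
      rw [hpDW_sum]
      refine Finset.sum_nonneg fun n _ => hblock ℓ' hne n (x n) ?_
      rw [hL] at hxL; exact hxL n
    have := hQ0 ℓ' x
    linarith
  have hNEuniq : ∀ ℓ', isNE ℓ' → ∀ x ∈ L, W x = W ℓ' → x = ℓ' := by
    intro ℓ' hne x hxL hWeq
    have h2 := hExp ℓ' x
    have hDW : 0 ≤ hpDW ω lhat a1 a2 α ℓ' x := by
      rw [hpDW_sum]
      refine Finset.sum_nonneg fun n _ => hblock ℓ' hne n (x n) ?_
      rw [hL] at hxL; exact hxL n
    have hQx := hQ0 ℓ' x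
    have hQzero : hpQ ω a2 α ℓ' x = 0 := by linarith
    exact hpQ_pos_def ω a2 α hα0 hα1 hω ha2 ℓ' x hQzero
  -- compactness and existence of a minimizer
  have hLnc : ∀ n, IsCompact (Ln n) := by
    intro n
    have hclosed : IsClosed (Ln n) := by
      rw [hLn]
      have hset : {x : Fin H → ℝ | (∑ h, x h) = En n ∧ ∀ h, lb n h ≤ x h ∧ x h ≤ ub n h}
          = {x : Fin H → ℝ | (∑ h, x h) = En n}
            ∩ ⋂ h, (fun x : Fin H → ℝ => x h) ⁻¹' (Set.Icc (lb n h) (ub n h)) := by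
        ext x
        simp [Set.mem_iInter]
      rw [hset]
      refine IsClosed.inter (isClosed_eq (by fun_prop) continuous_const)
        (isClosed_iInter fun h => IsClosed.preimage (continuous_apply h) isClosed_Icc)
    have hsub : Ln n ⊆ Set.pi Set.univ (fun h => Set.Icc (lb n h) (ub n h)) := by
      intro x hx
      rw [hLn] at hx
      intro h _
      exact ⟨(hx.2 h).1, (hx.2 h).2⟩
    exact IsCompact.of_isClosed_subset (isCompact_univ_pi fun h => isCompact_Icc)
      hclosed hsub
  have hLc : IsCompact L := by
    have hLpi : L = Set.pi Set.univ Ln := by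
      rw [hL]; ext x; simp [Set.mem_pi]
    rw [hLpi]
    exact isCompact_univ_pi hLnc
  have hLne : L.Nonempty := by
    refine ⟨fun n => (hLnNonempty n).choose, ?_⟩
    rw [hL]; intro n; exact (hLnNonempty n).choose_spec
  have hWc : Continuous W := by
    have hWfun : W = fun ℓ =>
        (1 - α) * ∑ h, (a2 h / 2 * ((∑ m, ℓ m h) ^ 2 + ∑ n, (ℓ n h) ^ 2)
          + a1 h * (∑ m, ℓ m h))
        + α * ∑ n, ω n * ∑ h, (ℓ n h - lhat n h) ^ 2 := funext hW
    rw [hWfun]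
    fun_prop
  obtain ⟨ℓ₀, hℓ₀L, hmin₀⟩ := hLc.exists_isMinOn hLne hWc.continuousOn
  have hmin : ∀ x ∈ L, W ℓ₀ ≤ W x := fun x hx => hmin₀ hx
  have hNE₀ : isNE ℓ₀ := hMinNE ℓ₀ hℓ₀L hmin
  constructor
  · refine ⟨ℓ₀, hNE₀, fun ℓ' hne' => ?_⟩
    have hmemℓ' : ℓ' ∈ L := ((hNE ℓ').mp hne').1
    have h1 : W ℓ' ≤ W ℓ₀ := hNEmin ℓ' hne' ℓ₀ hℓ₀L
    have h2 : W ℓ₀ ≤ W ℓ' := hmin ℓ' hmemℓ'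
    exact hNEuniq ℓ₀ hNE₀ ℓ' hmemℓ' (le_antisymm h1 h2)
  · intro ℓ' hmem'
    constructor
    · intro hne'
      exact ⟨hNEmin ℓ' hne', fun x hx hWeq => hNEuniq ℓ' hne' x hx hWeq⟩
    · rintro ⟨hmin', _⟩
      exact hMinNE ℓ' hmem' hmin'
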